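/- Let ‖·‖ be a semi-norm on ℝⁿ with standard basis e₁,…,eₙ such that ‖e₁ + e₂ + ⋯ + eₙ‖ = ‖e₁‖ + ‖e₂‖ + ⋯ + ‖eₙ‖. Then for all nonnegative reals c₁,…,cₙ, we have ‖c₁e₁ + ⋯ + cₙeₙ‖ = c₁‖e₁‖ + ⋯ + cₙ‖eₙ‖. -/

import Mathlib

lemma seminorm_sum_le' {n : ℕ} (p : Seminorm ℝ (Fin n → ℝ)) (s : Finset (Fin n))
    (f : Fin n → (Fin n → ℝ)) : p (∑ i ∈ s, f i) ≤ ∑ i ∈ s, p (f i) := by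
  classical
  induction s using Finset.induction_on with
  | empty => simp
  | insert _ _ hx ih =>
    rename_i a s
    rw [Finset.sum_insert hx, Finset.sum_insert hx]
    exact le_trans (map_add_le_add p _ _) (by linarith)

/-- Additivity of a semi-norm on the nonnegative orthant, given additivity
at the all-ones point. -/
theorem seminorm_additive_on_nonneg_orthant (n : ℕ) (p : Seminorm ℝ (Fin n → ℝ))
    (h : p (∑ i, Pi.single i (1 : ℝ)) = ∑ i, p (Pi.single i (1 : ℝ)))
    (c : Fin n → ℝ) (hc : ∀ i, 0 ≤ c i) :
    p (∑ i, c i • (Pi.single i (1 : ℝ) : Fin n → ℝ)) = ∑ i, c i * p (Pi.single i (1 : ℝ)) := by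
  set e : Fin n → (Fin n → ℝ) := fun i => Pi.single i (1 : ℝ) with he
  have upper : p (∑ i, c i • e i) ≤ ∑ i, c i * p (e i) := by
    refine le_trans (seminorm_sum_le' p _ _) (le_of_eq ?_)
    refine Finset.sum_congr rfl fun i _ => ?_
    rw [map_smul_eq_mul, Real.norm_of_nonneg (hc i)]
  set C : ℝ := ∑ i, c i with hCdef
  have hC0 : 0 ≤ C := Finset.sum_nonneg fun i _ => hc i
  have hCi : ∀ i, c i ≤ C := fun i =>
    Finset.single_le_sum (fun j _ => hc j) (Finset.mem_univ i)
  have key : C • ∑ i, e i = (∑ i, c i • e i) + ∑ i, (C - c i) • e i := by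
    rw [← Finset.sum_add_distrib, Finset.smul_sum]
    refine Finset.sum_congr rfl fun i _ => ?_
    rw [← add_smul]
    congr 1
    ring
  have h1 : C * ∑ i, p (e i) = p (C • ∑ i, e i) := by
    rw [map_smul_eq_mul, Real.norm_of_nonneg hC0, h]
  have h2 : p (C • ∑ i, e i) ≤ p (∑ i, c i • e i) + ∑ i, (C - c i) * p (e i) := by
    rw [key]
    refine le_trans (map_add_le_add p _ _) ?_
    gcongr
    refine le_trans (seminorm_sum_le' p _ _) (le_of_eq ?_)
    refine Finset.sum_congr rfl fun i _ => ?_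
    rw [map_smul_eq_mul, Real.norm_of_nonneg (by linarith [hCi i])]
  have h3 : ∑ i, (C - c i) * p (e i) = C * ∑ i, p (e i) - ∑ i, c i * p (e i) := by
    rw [Finset.mul_sum, ← Finset.sum_sub_distrib]
    exact Finset.sum_congr rfl fun i _ => by ring
  have lower : ∑ i, c i * p (e i) ≤ p (∑ i, c i • e i) := by
    rw [h3] at h2; linarith
  exact le_antisymm upper lower
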